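/- The ring F_q[X^p, Y^p, θ_q], with θ_q = X^q Y − X Y^q, is integrally closed in its field of fractions; equivalently, the hypersurface in A^3 defined by X_1^q X_2 − X_1 X_2^q − X_3^p = 0 is normal. -/

import Mathlib

open MvPolynomial

namespace ThetaNormalAux
variable {F : Type*} [Field F]

/-- the monomial exponent (a, b) as a `Fin 2 →₀ ℕ`. -/
noncomputable def mm (a b : ℕ) : Fin 2 →₀ ℕ := Finsupp.single 0 a + Finsupp.single 1 b

@[simp] lemma mm_apply0 (a b : ℕ) : mm a b 0 = a := by simp [mm]
@[simp] lemma mm_apply1 (a b : ℕ) : mm a b 1 = b := by simp [mm, Finsupp.single_apply]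

lemma mm_eta (m : Fin 2 →₀ ℕ) : mm (m 0) (m 1) = m := by
  ext i; fin_cases i <;> simp

lemma mm_inj {a b a' b' : ℕ} (h : mm a b = mm a' b') : a = a' ∧ b = b' := by
  constructor
  · simpa using congrArg (fun m => m 0) h
  · simpa using congrArg (fun m => m 1) h

/-- coefficient of `X^a Y^b` -/
noncomputable def cf (f : MvPolynomial (Fin 2) F) (a b : ℕ) : F := coeff (mm a b) f

/-- The derivation `X^q ∂_X + Y^q ∂_Y` (as a bare function). -/
noncomputable def Dq (q : ℕ) (f : MvPolynomial (Fin 2) F) : MvPolynomial (Fin 2) F :=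
  X 0 ^ q * pderiv 0 f + X 1 ^ q * pderiv 1 f

lemma Dq_add (q : ℕ) (f g : MvPolynomial (Fin 2) F) : Dq q (f + g) = Dq q f + Dq q g := by
  simp [Dq]; ring

lemma Dq_sub (q : ℕ) (f g : MvPolynomial (Fin 2) F) : Dq q (f - g) = Dq q f - Dq q g := by
  simp [Dq]; ring

lemma Dq_mul (q : ℕ) (f g : MvPolynomial (Fin 2) F) :
    Dq q (f * g) = Dq q f * g + f * Dq q g := by
  simp [Dq, pderiv_mul]; ring

lemma Dq_C (q : ℕ) (a : F) : Dq q (C a : MvPolynomial (Fin 2) F) = 0 := by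
  simp [Dq]

lemma coeff_pderiv (i : Fin 2) (m : Fin 2 →₀ ℕ) (f : MvPolynomial (Fin 2) F) :
    coeff m (pderiv i f) = ((m i + 1 : ℕ) : F) * coeff (m + Finsupp.single i 1) f := by
  induction f using MvPolynomial.induction_on' with
  | monomial s a =>
    rw [pderiv_monomial]
    by_cases h : s = m + Finsupp.single i 1
    · subst h
      rw [coeff_monomial, coeff_monomial]
      simp [add_tsub_cancel_right, mul_comm]
    · rw [coeff_monomial, coeff_monomial, if_neg h, mul_zero]
      by_cases h2 : s - Finsupp.single i 1 = m
      · by_cases hsi : s i = 0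
        · simp [h2, hsi]
        · exfalso
          apply h
          ext j
          have h2j : s j - (Finsupp.single i 1) j = m j := by
            rw [← Finsupp.tsub_apply, h2]
          rw [Finsupp.add_apply]
          rcases eq_or_ne i j with rfl | hij
          · rw [Finsupp.single_eq_same] at h2j ⊢
            omega
          · rw [Finsupp.single_eq_of_ne' hij] at h2j ⊢
            omega
      · rw [if_neg h2]
  | add p q hp hq => simp [map_add, coeff_add, hp, hq, mul_add]


lemma mm_sub0 (A B c : ℕ) : mm A B - Finsupp.single 0 c = mm (A - c) B := by
  ext j; rw [Finsupp.tsub_apply]; fin_cases j <;> simp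

lemma mm_sub1 (A B c : ℕ) : mm A B - Finsupp.single 1 c = mm A (B - c) := by
  ext j; rw [Finsupp.tsub_apply]; fin_cases j <;> simp [Finsupp.single_apply]

lemma mm_add0 (A B c : ℕ) : mm A B + Finsupp.single 0 c = mm (A + c) B := by
  ext j; rw [Finsupp.add_apply]; fin_cases j <;> simp

lemma mm_add1 (A B c : ℕ) : mm A B + Finsupp.single 1 c = mm A (B + c) := by
  ext j; rw [Finsupp.add_apply]; fin_cases j <;> simp [Finsupp.single_apply]

/-- The master coefficient relation extracted from `Dq q f = 0`. -/
lemma rel {q : ℕ} {f : MvPolynomial (Fin 2) F} (hf : Dq q f = 0) (A B : ℕ) :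
    (if q ≤ A then ((A - q + 1 : ℕ) : F) * cf f (A - q + 1) B else 0)
      + (if q ≤ B then ((B - q + 1 : ℕ) : F) * cf f A (B - q + 1) else 0) = 0 := by
  have h0 := congrArg (coeff (mm A B)) hf
  rw [coeff_zero, Dq, coeff_add] at h0
  have key : ∀ (i : Fin 2) (g : MvPolynomial (Fin 2) F),
      coeff (mm A B) (X i ^ q * g)
        = if q ≤ mm A B i then coeff (mm A B - Finsupp.single i q) g else 0 := by
    intro i g
    rw [X_pow_eq_monomial, mul_comm, coeff_mul_monomial']
    simp [Finsupp.single_le_iff]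
  rw [key 0, key 1, mm_apply0, mm_apply1, mm_sub0, mm_sub1] at h0
  have e0 : coeff (mm (A - q) B) (pderiv 0 f) = ((A - q + 1 : ℕ) : F) * cf f (A - q + 1) B := by
    rw [coeff_pderiv, mm_apply0, mm_add0, cf]
  have e1 : coeff (mm A (B - q)) (pderiv 1 f) = ((B - q + 1 : ℕ) : F) * cf f A (B - q + 1) := by
    rw [coeff_pderiv, mm_apply1, mm_add1, cf]
  rw [e0, e1] at h0
  exact h0

section Ker
variable (p q : ℕ) [CharP F p]

/-- Elements of the adjoined algebra are killed by `Dq`. -/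
lemma ker_Dq (hpq : p ∣ q) (hp : p ≠ 0)
    {f : MvPolynomial (Fin 2) F}
    (hf : f ∈ Algebra.adjoin F
      ({X 0 ^ p, X 1 ^ p, X 0 ^ q * X 1 - X 0 * X 1 ^ q} : Set (MvPolynomial (Fin 2) F))) :
    Dq q f = 0 := by
  haveI : CharP (MvPolynomial (Fin 2) F) p := inferInstance
  have hpB : ((p : ℕ) : MvPolynomial (Fin 2) F) = 0 := CharP.cast_eq_zero _ p
  have hqB : ((q : ℕ) : MvPolynomial (Fin 2) F) = 0 := by
    rw [(CharP.cast_eq_zero_iff (MvPolynomial (Fin 2) F) p q)]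
    exact hpq
  induction hf using Algebra.adjoin_induction with
  | mem x hx =>
    rcases hx with rfl | rfl | rfl
    · simp [Dq, pderiv_pow, pderiv_X_self, pderiv_X_of_ne (show (0 : Fin 2) ≠ 1 by decide),
        hpB]
    · simp [Dq, pderiv_pow, pderiv_X_self, pderiv_X_of_ne (show (1 : Fin 2) ≠ 0 by decide),
        hpB]
    · simp only [Dq, map_sub, pderiv_mul, pderiv_pow, pderiv_X_self,
        pderiv_X_of_ne (show (0 : Fin 2) ≠ 1 by decide),
        pderiv_X_of_ne (show (1 : Fin 2) ≠ 0 by decide), hqB]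
      ring
  | algebraMap r => simpa using Dq_C q r
  | add x y hx hy ihx ihy => rw [Dq_add, ihx, ihy, add_zero]
  | mul x y hx hy ihx ihy => rw [Dq_mul, ihx, ihy]; ring

end Ker


section GRepr
variable {q : ℕ}

/-- Binomial expansion of the correction element. -/
lemma g_repr (c : F) (a b s : ℕ) (hqs : q * s ≤ a) (hsb : s ≤ b) :
    C c * ((X 0 : MvPolynomial (Fin 2) F) ^ (a - q * s) * X 1 ^ (b - s)
        * (X 0 ^ q * X 1 - X 0 * X 1 ^ q) ^ s)
      = ∑ j ∈ Finset.range (s + 1),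
          monomial (mm (a - q * s + (q * j + (s - j))) (b - s + (j + q * (s - j))))
            (c * ((-1) ^ (s - j) * (s.choose j : F))) := by
  rw [sub_eq_add_neg, add_pow, Finset.mul_sum, Finset.mul_sum]
  refine Finset.sum_congr rfl ?_
  intro j hj
  have hrhs : (monomial (mm (a - q * s + (q * j + (s - j))) (b - s + (j + q * (s - j))))
        (c * ((-1) ^ (s - j) * (s.choose j : F))) : MvPolynomial (Fin 2) F)
      = C c * ((-1 : MvPolynomial (Fin 2) F) ^ (s - j) * (s.choose j : MvPolynomial (Fin 2) F)
          * (X 0 ^ (a - q * s + (q * j + (s - j))) * X 1 ^ (b - s + (j + q * (s - j))))) := by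
    rw [show mm (a - q * s + (q * j + (s - j))) (b - s + (j + q * (s - j)))
        = Finsupp.single (0 : Fin 2) (a - q * s + (q * j + (s - j)))
          + Finsupp.single (1 : Fin 2) (b - s + (j + q * (s - j))) from rfl]
    rw [X_pow_eq_monomial, X_pow_eq_monomial, monomial_mul,
      show ((-1 : MvPolynomial (Fin 2) F)) = C (-1 : F) by simp,
      ← map_pow, show ((s.choose j : MvPolynomial (Fin 2) F)) = C ((s.choose j : F)) by simp,
      ← map_mul, C_mul_monomial, C_mul_monomial]
    congr 1
    ring
  rw [hrhs]
  rw [neg_pow, mul_pow, mul_pow, ← pow_mul, ← pow_mul]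
  rw [pow_add, pow_add, pow_add, pow_add]
  ring

lemma e0_lt (hq2 : 2 ≤ q) {j s a : ℕ} (hj : j < s) (hqs : q * s ≤ a) :
    a - q * s + (q * j + (s - j)) < a := by
  have h2 : q * j + (s - j) * q = q * s := by
    rw [Nat.mul_comm (s - j) q, ← Nat.mul_add, Nat.add_sub_cancel' hj.le]
  have h1 : (s - j) * 1 < (s - j) * q :=
    mul_lt_mul_of_pos_left (by omega) (by omega)
  rw [mul_one] at h1
  have hlt : q * j + (s - j) < q * s := by omega
  calc a - q * s + (q * j + (s - j)) < a - q * s + q * s := Nat.add_lt_add_left hlt _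
    _ = a := Nat.sub_add_cancel hqs

lemma mm_self {q a b : ℕ} (s : ℕ) (hqs : q * s ≤ a) (hsb : s ≤ b) :
    mm (a - q * s + (q * s + (s - s))) (b - s + (s + q * (s - s))) = mm a b := by
  rw [Nat.sub_self, Nat.mul_zero, Nat.add_zero, Nat.add_zero,
    Nat.sub_add_cancel hqs, Nat.sub_add_cancel hsb]

lemma cf_g_self (hq2 : 2 ≤ q) (c : F) {a b : ℕ} (s : ℕ) (hqs : q * s ≤ a) (hsb : s ≤ b) :
    cf (C c * ((X 0 : MvPolynomial (Fin 2) F) ^ (a - q * s) * X 1 ^ (b - s)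
        * (X 0 ^ q * X 1 - X 0 * X 1 ^ q) ^ s)) a b = c := by
  rw [cf, g_repr c a b s hqs hsb]
  rw [MvPolynomial.coeff_sum]
  rw [Finset.sum_eq_single_of_mem s (Finset.self_mem_range_succ s)]
  · rw [coeff_monomial, if_pos (mm_self s hqs hsb), Nat.sub_self, Nat.choose_self]
    simp
  · intro j hj hjs
    rw [coeff_monomial, if_neg]
    intro hmm
    have := (mm_inj hmm).1
    have hjlt : j < s := by
      rcases Finset.mem_range.mp hj with h; omega
    exact absurd this (Nat.ne_of_lt (e0_lt hq2 hjlt hqs))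

lemma cf_g_ne (hq2 : 2 ≤ q) (c : F) {a b : ℕ} (s : ℕ) (hqs : q * s ≤ a) (hsb : s ≤ b)
    (m : Fin 2 →₀ ℕ)
    (hm : coeff m (C c * ((X 0 : MvPolynomial (Fin 2) F) ^ (a - q * s) * X 1 ^ (b - s)
        * (X 0 ^ q * X 1 - X 0 * X 1 ^ q) ^ s)) ≠ 0) :
    m = mm a b ∨ toLex (m 0, m 1) < toLex (a, b) := by
  rw [g_repr c a b s hqs hsb, MvPolynomial.coeff_sum] at hm
  obtain ⟨j, hj, hjne⟩ := Finset.exists_ne_zero_of_sum_ne_zero hm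
  rw [coeff_monomial] at hjne
  have hcond : mm (a - q * s + (q * j + (s - j))) (b - s + (j + q * (s - j))) = m := by
    by_contra h; rw [if_neg h] at hjne; exact hjne rfl
  rcases eq_or_lt_of_le (Nat.lt_succ_iff.mp (Finset.mem_range.mp hj)) with heq | hjlt
  · left
    rw [← hcond, heq, mm_self s hqs hsb]
  · right
    rw [← hcond, mm_apply0, mm_apply1, Prod.Lex.lt_iff]
    left
    exact e0_lt hq2 hjlt hqs

end GRepr


section Main
variable {p q : ℕ}

lemma cast_b_add_ne (hp : p.Prime) [CharP F p] (hpq : p ∣ q) (hq2 : 2 ≤ q)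
    {b s k : ℕ} (hsp : s < p) (hs : s = b % p) (hks : k < s) :
    ((b + k * (q - 1) : ℕ) : F) ≠ 0 := by
  rw [Ne, CharP.cast_eq_zero_iff F p]
  intro hdvd
  have hsb : s ≤ b := hs ▸ Nat.mod_le b p
  have hpbs : p ∣ b - s := by
    have := Nat.div_add_mod b p
    exact ⟨b / p, by omega⟩
  have hq1 : k * (q - 1) + k * 1 = k * q := by
    rw [← Nat.mul_add, Nat.sub_add_cancel (by omega)]
  rw [mul_one] at hq1
  have hdecomp : b + k * (q - 1) = (s - k) + ((b - s) + k * q) := by omega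
  rw [hdecomp] at hdvd
  have hd2 : p ∣ (b - s) + k * q := Nat.dvd_add hpbs (hpq.mul_left k)
  have hd3 : p ∣ s - k := by
    have h := Nat.dvd_sub hdvd hd2
    rwa [Nat.add_sub_cancel] at h
  have := Nat.le_of_dvd (by omega) hd3
  omega

theorem ker_sub (hp : p.Prime) [CharP F p] (hpq : p ∣ q) (hq2 : 2 ≤ q) :
    ∀ (M : ℕ ×ₗ ℕ) (f : MvPolynomial (Fin 2) F),
      (∀ m ∈ f.support, toLex (m 0, m 1) < M) → Dq q f = 0 →
      f ∈ Algebra.adjoin F ({X 0 ^ p, X 1 ^ p, X 0 ^ q * X 1 - X 0 * X 1 ^ q} :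
        Set (MvPolynomial (Fin 2) F)) := by
  intro M
  induction M using WellFoundedLT.induction with
  | _ M IH =>
  intro f hbound hDf
  rcases eq_or_ne f 0 with rfl | hf0
  · exact zero_mem _
  obtain ⟨mx, hmxmem, hmxmax⟩ :=
    f.support.exists_max_image (fun m => toLex (m 0, m 1)) (MvPolynomial.support_nonempty.mpr hf0)
  set a := mx 0 with ha
  set b := mx 1 with hb
  have hc : cf f a b ≠ 0 := by
    rw [cf, ha, hb, mm_eta]
    exact MvPolynomial.mem_support_iff.mp hmxmem
  have hvan : ∀ A B : ℕ, toLex (a, b) < toLex (A, B) → cf f A B = 0 := by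
    intro A B hAB
    by_contra hne
    have hm : mm A B ∈ f.support := MvPolynomial.mem_support_iff.mpr hne
    have h2 := hmxmax _ hm
    rw [mm_apply0, mm_apply1] at h2
    exact absurd hAB (not_lt.mpr h2)
  have hp0 : 0 < p := hp.pos
  -- Fact (i): p divides a
  have hpa : p ∣ a := by
    by_contra hnd
    have ha1 : 1 ≤ a := by
      rcases Nat.eq_zero_or_pos a with h | h
      · exact absurd (h ▸ dvd_zero p) hnd
      · exact h
    have hrel := rel hDf (a + q - 1) b
    rw [if_pos (by omega)] at hrel
    have e : a + q - 1 - q + 1 = a := by omega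
    rw [e] at hrel
    have h2 : (if q ≤ b then ((b - q + 1 : ℕ) : F) * cf f (a + q - 1) (b - q + 1) else 0) = 0 := by
      by_cases hbq : q ≤ b
      · rw [if_pos hbq, hvan (a + q - 1) (b - q + 1) (by rw [Prod.Lex.lt_iff]; left; simp only [ofLex_toLex]; omega),
          mul_zero]
      · rw [if_neg hbq]
    rw [h2, add_zero] at hrel
    rcases mul_eq_zero.mp hrel with h' | h'
    · rw [CharP.cast_eq_zero_iff F p a] at h'
      exact hnd h'
    · exact hc h'
  set s := b % p with hs
  have hsp : s < p := Nat.mod_lt _ hp0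
  have hsb : s ≤ b := Nat.mod_le _ _
  -- Fact (ii): q * s ≤ a
  have hqs : q * s ≤ a := by
    by_contra hlt0
    push_neg at hlt0
    have hs1 : 1 ≤ s := by
      rcases Nat.eq_zero_or_pos s with h | h
      · rw [h, Nat.mul_zero] at hlt0; omega
      · exact h
    have hb1 : 1 ≤ b := le_trans hs1 hsb
    have chain : ∀ k, k ≤ s → (∀ k' < k, q + k' * (q - 1) ≤ a) →
        cf f (a - k * (q - 1)) (b + k * (q - 1)) ≠ 0 := by
      intro k
      induction k with
      | zero => intro _ _; simpa using hc
      | succ k IHk =>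
        intro hk1 hval
        have hvk : q + k * (q - 1) ≤ a := hval k (Nat.lt_succ_self k)
        have hck : cf f (a - k * (q - 1)) (b + k * (q - 1)) ≠ 0 :=
          IHk (by omega) (fun k' hk' => hval k' (by omega))
        have hqq : (k + 1) * (q - 1) = k * (q - 1) + (q - 1) := Nat.succ_mul k (q - 1)
        rw [hqq]
        set t := k * (q - 1) with ht
        rw [← add_assoc]
        have hrel := rel hDf (a - t) (b + t + (q - 1))
        rw [if_pos (by omega), if_pos (by omega)] at hrel
        have e1 : a - t - q + 1 = a - (t + (q - 1)) := by omega
        have e2 : b + t + (q - 1) - q + 1 = b + t := by omega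
        rw [e1, e2] at hrel
        have hbknz : ((b + t : ℕ) : F) ≠ 0 := by
          rw [ht]
          exact cast_b_add_ne hp hpq hq2 hsp hs (by omega)
        intro hzero
        rw [hzero, mul_zero, zero_add] at hrel
        exact (mul_ne_zero hbknz hck) hrel
    by_cases hall : ∀ k' < s, q + k' * (q - 1) ≤ a
    · have hcs := chain s le_rfl hall
      have hss1 : q + (s - 1) * (q - 1) ≤ a := hall (s - 1) (by omega)
      have hmul : (s - 1) * (q - 1) + (q - 1) = s * (q - 1) := by
        have h' := add_one_mul (s - 1) (q - 1)
        rw [Nat.sub_add_cancel hs1] at h'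
        rw [← h']
      have hmul2 : s * (q - 1) + s * 1 = s * q := by
        rw [← Nat.mul_add, Nat.sub_add_cancel (by omega)]
      rw [mul_one] at hmul2
      have hcomm : q * s = s * q := Nat.mul_comm q s
      set u := a - s * (q - 1) with hu
      have hu1 : 1 ≤ u := by omega
      have hus : u < s := by omega
      have hdvd : p ∣ s - u := by
        have heq : s - u = s * q - a := by omega
        rw [heq]
        exact Nat.dvd_sub (hpq.mul_left s) hpa
      have hple := Nat.le_of_dvd (by omega) hdvd
      omega
    · push_neg at hall
      obtain ⟨k0, hk0s, hk0a⟩ := hall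
      have hex : ∃ k, a < q + k * (q - 1) := ⟨k0, hk0a⟩
      set k1 := Nat.find hex with hk1def
      have hk1le : k1 ≤ k0 := Nat.find_min' hex hk0a
      have hk1lt : k1 < s := lt_of_le_of_lt hk1le hk0s
      have hk1a : a < q + k1 * (q - 1) := Nat.find_spec hex
      have hmin : ∀ k' < k1, q + k' * (q - 1) ≤ a := fun k' hk' =>
        not_lt.mp (Nat.find_min hex hk')
      have hck1 := chain k1 hk1lt.le hmin
      set t := k1 * (q - 1) with ht
      have hrel := rel hDf (a - t) (b + t + (q - 1))
      rw [if_neg (by omega), if_pos (by omega)] at hrel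
      have e2 : b + t + (q - 1) - q + 1 = b + t := by omega
      rw [e2, zero_add] at hrel
      have hbknz : ((b + t : ℕ) : F) ≠ 0 := by
        rw [ht]
        exact cast_b_add_ne hp hpq hq2 hsp hs hk1lt
      exact (mul_ne_zero hbknz hck1) hrel
  -- the correction element
  set c := cf f a b with hcdef
  set g := C c * ((X 0 : MvPolynomial (Fin 2) F) ^ (a - q * s) * X 1 ^ (b - s)
      * (X 0 ^ q * X 1 - X 0 * X 1 ^ q) ^ s) with hg
  have hdvd0 : p ∣ a - q * s := Nat.dvd_sub hpa (hpq.mul_right s)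
  have hdvd1 : p ∣ b - s := by
    have := Nat.div_add_mod b p
    exact ⟨b / p, by omega⟩
  have hgR : g ∈ Algebra.adjoin F ({X 0 ^ p, X 1 ^ p, X 0 ^ q * X 1 - X 0 * X 1 ^ q} :
      Set (MvPolynomial (Fin 2) F)) := by
    rw [hg]
    have h1 : (X 0 : MvPolynomial (Fin 2) F) ^ (a - q * s) = (X 0 ^ p) ^ ((a - q * s) / p) := by
      rw [← pow_mul, Nat.mul_div_cancel' hdvd0]
    have h2 : (X 1 : MvPolynomial (Fin 2) F) ^ (b - s) = (X 1 ^ p) ^ ((b - s) / p) := by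
      rw [← pow_mul, Nat.mul_div_cancel' hdvd1]
    rw [h1, h2]
    refine mul_mem ?_ (mul_mem (mul_mem (pow_mem ?_ _) (pow_mem ?_ _)) (pow_mem ?_ _))
    · rw [show (C c : MvPolynomial (Fin 2) F) = algebraMap F _ c from rfl]
      exact Subalgebra.algebraMap_mem _ c
    · exact Algebra.subset_adjoin (by simp)
    · exact Algebra.subset_adjoin (by simp)
    · exact Algebra.subset_adjoin (by simp)
  have hDg : Dq q g = 0 := ker_Dq p q hpq hp.ne_zero hgR
  have hDf' : Dq q (f - g) = 0 := by rw [Dq_sub, hDf, hDg, sub_zero]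
  have hbound' : ∀ m ∈ (f - g).support, toLex (m 0, m 1) < toLex (a, b) := by
    intro m hm
    have hne := MvPolynomial.mem_support_iff.mp hm
    rw [MvPolynomial.coeff_sub] at hne
    rcases eq_or_ne m (mm a b) with rfl | hmne
    · exfalso
      apply hne
      have hcg : coeff (mm a b) g = c := by
        rw [hg]
        exact cf_g_self hq2 c s hqs hsb
      rw [hcg, show coeff (mm a b) f = c from rfl, sub_self]
    · by_cases hgm : coeff m g = 0
      · have hfm : coeff m f ≠ 0 := by
          intro hval
          rw [hval, hgm, sub_zero] at hne
          exact hne rfl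
        have hle := hmxmax m (MvPolynomial.mem_support_iff.mpr hfm)
        rcases lt_or_eq_of_le hle with hlt | heq
        · exact hlt
        · exfalso
          apply hmne
          have h12 : (m 0, m 1) = (a, b) := toLex.injective heq
          rw [← mm_eta m, show m 0 = a from congrArg Prod.fst h12,
            show m 1 = b from congrArg Prod.snd h12]
      · rcases cf_g_ne hq2 c s hqs hsb m hgm with heq | hlt
        · exact absurd heq hmne
        · exact hlt
  have hMlt : toLex (a, b) < M := hbound mx hmxmem
  have hmem' := IH (toLex (a, b)) hMlt (f - g) hbound' hDf'
  have hfg : f = (f - g) + g := by ring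
  rw [hfg]
  exact add_mem hmem' hgR

theorem ker_mem (hp : p.Prime) [CharP F p] (hpq : p ∣ q) (hq2 : 2 ≤ q)
    (f : MvPolynomial (Fin 2) F) (hDf : Dq q f = 0) :
    f ∈ Algebra.adjoin F ({X 0 ^ p, X 1 ^ p, X 0 ^ q * X 1 - X 0 * X 1 ^ q} :
      Set (MvPolynomial (Fin 2) F)) := by
  refine ker_sub hp hpq hq2 (toLex (f.totalDegree + 1, 0)) f ?_ hDf
  intro m hm
  rw [Prod.Lex.lt_iff]
  left
  have h1 := MvPolynomial.le_totalDegree hm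
  have h2 : m 0 ≤ m.sum fun _ e => e := by
    rcases Nat.eq_zero_or_pos (m 0) with h | h
    · omega
    · have hmem : (0 : Fin 2) ∈ m.support := Finsupp.mem_support_iff.mpr (by omega)
      exact Finset.single_le_sum (f := fun a => m a) (fun _ _ => Nat.zero_le _) hmem
  simp only [ofLex_toLex]
  omega

end Main

end ThetaNormalAux


open ThetaNormalAux in
set_option synthInstance.maxHeartbeats 1000000 in
set_option maxHeartbeats 1000000 in
/-- The ring `F_q[X^p, Y^p, θ_q]`, with `θ_q = X^q Y − X Y^q`, is integrally
closed in its field of fractions (i.e. the hypersurface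
`X₁^q X₂ − X₁ X₂^q − X₃^p = 0` in `A³` is normal). -/
theorem adjoin_Xp_Yp_theta_integrallyClosed (F : Type*) [Field F] [Fintype F]
    (p n : ℕ) (hp : p.Prime) [CharP F p] (hq : Fintype.card F = p ^ n) :
    IsIntegrallyClosed
      (Algebra.adjoin F
        ({X 0 ^ p, X 1 ^ p,
          X 0 ^ Fintype.card F * X 1 - X 0 * X 1 ^ Fintype.card F} :
          Set (MvPolynomial (Fin 2) F))) := by
  set q := Fintype.card F with hqdef
  have hq2 : 2 ≤ q := Fintype.one_lt_card
  have hn : n ≠ 0 := by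
    intro h
    rw [h, pow_zero] at hq
    omega
  have hpq : p ∣ q := by rw [hq]; exact dvd_pow_self p hn
  set R := Algebra.adjoin F ({X 0 ^ p, X 1 ^ p, X 0 ^ q * X 1 - X 0 * X 1 ^ q} :
    Set (MvPolynomial (Fin 2) F)) with hR
  set B := MvPolynomial (Fin 2) F with hB
  have hRB : ∀ y : ↥R, algebraMap (↥R) (FractionRing B) y
      = algebraMap B (FractionRing B) (y : B) := by
    intro y
    rw [IsScalarTower.algebraMap_apply (↥R) B (FractionRing B)]
    rfl
  have hginj : Function.Injective (algebraMap (↥R) (FractionRing B)) := by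
    have h1 : Function.Injective (algebraMap B (FractionRing B)) := IsFractionRing.injective B _
    intro y z hyz
    rw [hRB, hRB] at hyz
    exact Subtype.val_injective (h1 hyz)
  set L := FractionRing (↥R) with hL
  have φdef := IsFractionRing.lift (A := ↥R) (K := L) hginj
  set φ : L →+* FractionRing B := IsFractionRing.lift (A := ↥R) (K := L) hginj with hφ
  have hφcomm : ∀ r : ↥R, φ (algebraMap (↥R) L r) = algebraMap (↥R) (FractionRing B) r :=
    fun r => IsFractionRing.lift_algebraMap hginj r
  rw [isIntegrallyClosed_iff L]
  intro x hx
  -- map the integral element into FractionRing B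
  have hφA : IsIntegral (↥R) (φ x) := by
    obtain ⟨P, hPmonic, hPeval⟩ := hx
    refine ⟨P, hPmonic, ?_⟩
    have : φ (Polynomial.eval₂ (algebraMap (↥R) L) x P) = 0 := by rw [hPeval, map_zero]
    rwa [Polynomial.hom_eval₂, (by ext r : 1; exact hφcomm r :
      φ.comp (algebraMap (↥R) L) = algebraMap (↥R) (FractionRing B))] at this
  have hBint : IsIntegral B (φ x) := hφA.tower_top
  haveI : IsIntegrallyClosed B := inferInstance
  obtain ⟨w, hw⟩ := IsIntegrallyClosed.isIntegral_iff.mp hBint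
  -- write x as a quotient
  obtain ⟨r, sden, hsden, hdiv⟩ := IsFractionRing.div_surjective (A := ↥R) x
  have hsne : (sden : B) ≠ 0 := by
    intro h0
    have : sden = 0 := Subtype.val_injective h0
    exact nonZeroDivisors.ne_zero hsden this
  have hsLne : algebraMap (↥R) L sden ≠ 0 := fun h0 =>
    nonZeroDivisors.ne_zero hsden (IsFractionRing.to_map_eq_zero_iff.mp h0)
  have hmul : x * algebraMap (↥R) L sden = algebraMap (↥R) L r := by
    rw [← hdiv, div_mul_cancel₀]
    exact hsLne
  -- transfer to B
  have hmulB : w * (sden : B) = (r : B) := by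
    apply IsFractionRing.injective B (FractionRing B)
    have := congrArg φ hmul
    rw [map_mul, hφcomm, hφcomm] at this
    rw [map_mul]
    calc (algebraMap B (FractionRing B)) w * (algebraMap B (FractionRing B)) (sden : B)
        = φ x * algebraMap (↥R) (FractionRing B) sden := by rw [hw, hRB]
      _ = algebraMap (↥R) (FractionRing B) r := this
      _ = algebraMap B (FractionRing B) (r : B) := hRB r
  -- derivation argument
  have hDr : Dq q (r : B) = 0 := ker_Dq p q hpq hp.ne_zero r.2
  have hDs : Dq q (sden : B) = 0 := ker_Dq p q hpq hp.ne_zero sden.2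
  have hDw : Dq q w = 0 := by
    have h1 : Dq q (w * (sden : B)) = 0 := by rw [hmulB, hDr]
    rw [Dq_mul, hDs, mul_zero, add_zero] at h1
    rcases mul_eq_zero.mp h1 with h | h
    · exact h
    · exact absurd h hsne
  have hwR : w ∈ R := ker_mem hp hpq hq2 w hDw
  refine ⟨⟨w, hwR⟩, ?_⟩
  have hφinj : Function.Injective φ := φ.injective
  apply hφinj
  rw [hφcomm ⟨w, hwR⟩]
  calc algebraMap (↥R) (FractionRing B) ⟨w, hwR⟩
      = algebraMap B (FractionRing B) w := hRB ⟨w, hwR⟩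
    _ = φ x := hw
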